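/- Let a > 0 and let (T,n,b) solve the Frenet system with curvature c ≡ a and torsion τ(x) = x/2, with orthonormal initial frame at x = 0. Then for every x ≠ 0, the vector field V(x) = T(x) + (2a/x)·b(x) satisfies V'(x) = −(2a/x²)·b(x), and hence |V(x₂) − V(x₁)| ≤ 2a·|1/x₁ − 1/x₂| for 0 < x₁ ≤ x₂. -/

import Mathlib

open Matrix

/-- An orthonormal frame of three vectors in ℝ³ (Euclidean inner product). -/
def IsOrthonormalFrame (T n b : Fin 3 → ℝ) : Prop :=
  T ⬝ᵥ T = 1 ∧ n ⬝ᵥ n = 1 ∧ b ⬝ᵥ b = 1 ∧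
  T ⬝ᵥ n = 0 ∧ T ⬝ᵥ b = 0 ∧ n ⬝ᵥ b = 0

/-- Euclidean norm of a vector in `Fin 3 → ℝ`. -/
noncomputable def enorm3 (v : Fin 3 → ℝ) : ℝ := Real.sqrt (v ⬝ᵥ v)

lemma hasDerivAt_dot {f g : ℝ → Fin 3 → ℝ} {f' g' : Fin 3 → ℝ} {x : ℝ}
    (hf : HasDerivAt f f' x) (hg : HasDerivAt g g' x) :
    HasDerivAt (fun y => f y ⬝ᵥ g y) (f' ⬝ᵥ g x + f x ⬝ᵥ g') x := by
  simp only [dotProduct]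
  rw [← Finset.sum_add_distrib]
  exact HasDerivAt.fun_sum fun i _ => (hasDerivAt_pi.1 hf i).mul (hasDerivAt_pi.1 hg i)

@[simp] lemma cons_val_five {α : Type*} (x₀ x₁ x₂ x₃ x₄ x₅ : α) :
    ![x₀, x₁, x₂, x₃, x₄, x₅] (5 : Fin 6) = x₅ := rfl

@[simp] lemma cons_val_five' {α : Type*} (x₀ x₁ x₂ x₃ x₄ x₅ : α) (h : 5 < 6) :
    ![x₀, x₁, x₂, x₃, x₄, x₅] ⟨5, h⟩ = x₅ := rfl

set_option maxHeartbeats 1000000 in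
lemma frenet_b_dot (a : ℝ) (ha : 0 < a) (T n b : ℝ → Fin 3 → ℝ)
    (hT : ∀ x : ℝ, HasDerivAt T (a • n x) x)
    (hn : ∀ x : ℝ, HasDerivAt n (-(a • T x) + (x / 2) • b x) x)
    (hb : ∀ x : ℝ, HasDerivAt b (-((x / 2) • n x)) x)
    (h0 : IsOrthonormalFrame (T 0) (n 0) (b 0)) :
    ∀ X : ℝ, 0 < X → b X ⬝ᵥ b X = 1 := by
  intro X hX
  set u : ℝ → Fin 6 → ℝ := fun x =>
    ![T x ⬝ᵥ T x - 1, n x ⬝ᵥ n x - 1, b x ⬝ᵥ b x - 1,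
      T x ⬝ᵥ n x, T x ⬝ᵥ b x, n x ⬝ᵥ b x] with hu_def
  set A : ℝ → Fin 6 → ℝ := fun x =>
    ![2 * a * u x 3,
      -(2 * a) * u x 3 + x * u x 5,
      -(x * u x 5),
      a * u x 1 - a * u x 0 + (x / 2) * u x 4,
      a * u x 5 - (x / 2) * u x 3,
      -(a * u x 4) + (x / 2) * u x 2 - (x / 2) * u x 1] with hA_def
  have hu : ∀ x : ℝ, HasDerivAt u (A x) x := by
    intro x
    refine hasDerivAt_pi.2 fun i => ?_
    fin_cases i
    · have h := (hasDerivAt_dot (hT x) (hT x)).sub_const 1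
      convert h using 1 <;>
        simp [hu_def, hA_def, smul_dotProduct, dotProduct_smul, dotProduct_comm] <;> ring
    · have h := (hasDerivAt_dot (hn x) (hn x)).sub_const 1
      convert h using 1 <;>
        simp [hu_def, hA_def, smul_dotProduct, dotProduct_smul, add_dotProduct,
          dotProduct_add, neg_dotProduct, dotProduct_neg, dotProduct_comm] <;> ring
    · have h := (hasDerivAt_dot (hb x) (hb x)).sub_const 1
      convert h using 1 <;>
        simp [hu_def, hA_def, smul_dotProduct, dotProduct_smul, neg_dotProduct,
          dotProduct_neg, dotProduct_comm] <;> ring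
    · have h := hasDerivAt_dot (hT x) (hn x)
      refine h.congr_deriv ?_ <;>
        simp [hu_def, hA_def, smul_dotProduct, dotProduct_smul, add_dotProduct,
          dotProduct_add, neg_dotProduct, dotProduct_neg, dotProduct_comm] <;> ring
    · have h := hasDerivAt_dot (hT x) (hb x)
      refine h.congr_deriv ?_ <;>
        simp [hu_def, hA_def, smul_dotProduct, dotProduct_smul, neg_dotProduct,
          dotProduct_neg, dotProduct_comm] <;> ring
    · have h := hasDerivAt_dot (hn x) (hb x)
      refine h.congr_deriv ?_ <;>
        simp [hu_def, hA_def, smul_dotProduct, dotProduct_smul, add_dotProduct,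
          dotProduct_add, neg_dotProduct, dotProduct_neg, dotProduct_comm] <;> ring
  obtain ⟨e1, e2, e3, e4, e5, e6⟩ := h0
  simp only [dotProduct, Fin.sum_univ_three] at e1 e2 e3 e4 e5 e6
  have hu0 : u 0 = 0 := by
    funext i
    fin_cases i <;> simp [hu_def, dotProduct, Fin.sum_univ_three] <;> linarith
  have hcont : Continuous u := continuous_iff_continuousAt.2 fun x => (hu x).continuousAt
  have bound : ∀ x ∈ Set.Ico (0 : ℝ) X, ‖A x‖ ≤ (2 * a + X) * ‖u x‖ + 0 := by
    intro x hx
    rw [add_zero]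
    set M := ‖u x‖ with hM_def
    have hM : 0 ≤ M := norm_nonneg _
    have hi : ∀ i, |u x i| ≤ M := fun i => by
      simpa [Real.norm_eq_abs] using norm_le_pi_norm (u x) i
    have hxa : ∀ i, |x * u x i| ≤ X * M := fun i => by
      rw [abs_mul, abs_of_nonneg hx.1]
      exact mul_le_mul hx.2.le (hi i) (abs_nonneg _) hX.le
    have haa : ∀ i, |a * u x i| ≤ a * M := fun i => by
      rw [abs_mul, abs_of_pos ha]
      exact mul_le_mul_of_nonneg_left (hi i) ha.le
    have l0 := abs_le.1 (haa 0); have l1 := abs_le.1 (haa 1)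
    have l2 := abs_le.1 (haa 2); have l3 := abs_le.1 (haa 3)
    have l4 := abs_le.1 (haa 4); have l5 := abs_le.1 (haa 5)
    have m1 := abs_le.1 (hxa 1); have m2 := abs_le.1 (hxa 2)
    have m3 := abs_le.1 (hxa 3); have m4 := abs_le.1 (hxa 4)
    have m5 := abs_le.1 (hxa 5)
    have hXM : 0 ≤ X * M := mul_nonneg hX.le hM
    have haM : 0 ≤ a * M := mul_nonneg ha.le hM
    refine (pi_norm_le_iff_of_nonneg (by positivity)).2 fun i => ?_
    fin_cases i <;>
      · simp only [hA_def, Real.norm_eq_abs, Matrix.cons_val_zero, Matrix.cons_val_one,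
          Matrix.head_cons, Matrix.cons_val_two, Matrix.tail_cons, Matrix.cons_val_three,
          Matrix.cons_val_four, cons_val_five, cons_val_five', Matrix.cons_val_zero',
          Matrix.cons_val_succ']
        exact abs_le.2 ⟨by linarith, by linarith⟩
  have key := norm_le_gronwallBound_of_norm_deriv_right_le (δ := 0) (K := 2 * a + X) (ε := 0)
    hcont.continuousOn (fun x _ => (hu x).hasDerivWithinAt) (by simp [hu0]) bound
  have hXle := key X ⟨hX.le, le_rfl⟩
  rw [gronwallBound_ε0_δ0] at hXle
  have huX : u X = 0 := by
    rw [← norm_eq_zero]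
    exact le_antisymm hXle (norm_nonneg _)
  have h2 := congrFun huX 2
  simp [hu_def, dotProduct, Fin.sum_univ_three] at h2
  simp only [dotProduct, Fin.sum_univ_three]
  linarith

lemma enorm3_eq_norm (v : Fin 3 → ℝ) :
    enorm3 v = ‖(PiLp.continuousLinearEquiv 2 ℝ (fun _ : Fin 3 => ℝ)).symm v‖ := by
  rw [EuclideanSpace.norm_eq, enorm3]
  congr 1
  simp [dotProduct, Fin.sum_univ_three, Real.norm_eq_abs, sq_abs, sq]

/-- for the self-similar Frenet frame, the modified field
`V = T + (2a/x) b` satisfies `V' = -(2a/x²) b`, hence a Cauchy estimate. -/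
theorem selfsimilar_frenet_modified_field
    (a : ℝ) (ha : 0 < a) (T n b : ℝ → Fin 3 → ℝ)
    (hT : ∀ x : ℝ, HasDerivAt T (a • n x) x)
    (hn : ∀ x : ℝ, HasDerivAt n (-(a • T x) + (x / 2) • b x) x)
    (hb : ∀ x : ℝ, HasDerivAt b (-((x / 2) • n x)) x)
    (h0 : IsOrthonormalFrame (T 0) (n 0) (b 0))
    (V : ℝ → Fin 3 → ℝ)
    (hV : ∀ x : ℝ, V x = T x + (2 * a / x) • b x) :
    (∀ x : ℝ, x ≠ 0 → deriv V x = -((2 * a / x ^ 2) • b x)) ∧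
    (∀ x₁ x₂ : ℝ, 0 < x₁ → x₁ ≤ x₂ →
      enorm3 (V x₂ - V x₁) ≤ 2 * a * |1 / x₁ - 1 / x₂|) := by
  have hbn : ∀ X : ℝ, 0 < X → b X ⬝ᵥ b X = 1 := frenet_b_dot a ha T n b hT hn hb h0
  have hVd : ∀ x : ℝ, x ≠ 0 → HasDerivAt V (-((2 * a / x ^ 2) • b x)) x := by
    intro x hx
    have hVe : V = fun y => T y + (2 * a / y) • b y := funext hV
    rw [hVe]
    have h1 : HasDerivAt (fun y : ℝ => 2 * a / y) (-(2 * a / x ^ 2)) x := by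
      have := (hasDerivAt_inv hx).const_mul (2 * a)
      convert this using 1
      · rfl
      · rfl
      · funext y; ring
      · ring
    have h3 := (hT x).add (h1.smul (hb x))
    refine h3.congr_deriv ?_
    have hax : (2 * a / x) * (x / 2) = a := by field_simp
    rw [smul_neg, smul_smul, hax]
    module
  constructor
  · exact fun x hx => (hVd x hx).deriv
  · intro x₁ x₂ hx1 h12
    have hbc : Continuous b := continuous_iff_continuousAt.2 fun x => (hb x).continuousAt
    set L := (PiLp.continuousLinearEquiv 2 ℝ (fun _ : Fin 3 => ℝ)).symm with hL
    set D : ℝ → EuclideanSpace ℝ (Fin 3) := fun t => L (-((2 * a / t ^ 2) • b t)) with hD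
    have hpos : ∀ t ∈ Set.uIcc x₁ x₂, (0:ℝ) < t := by
      intro t ht
      rw [Set.uIcc_of_le h12] at ht
      exact lt_of_lt_of_le hx1 ht.1
    have hfd : ∀ t ∈ Set.uIcc x₁ x₂, HasDerivAt (fun y => L (V y)) (D t) t := fun t ht =>
      (L.toContinuousLinearMap.hasFDerivAt).comp_hasDerivAt t (hVd t (hpos t ht).ne')
    have hDc : ContinuousOn D (Set.uIcc x₁ x₂) := by
      apply L.continuous.comp_continuousOn
      exact (((continuousOn_const.div ((continuous_pow 2).continuousOn)
        (fun t ht => pow_ne_zero _ (hpos t ht).ne')).smul hbc.continuousOn)).neg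
    have hInt : IntervalIntegrable D MeasureTheory.volume x₁ x₂ :=
      hDc.intervalIntegrable
    have key : ∫ t in x₁..x₂, D t = L (V x₂) - L (V x₁) :=
      intervalIntegral.integral_eq_sub_of_hasDerivAt hfd hInt
    have hg : ∀ t ∈ Set.uIcc x₁ x₂, HasDerivAt (fun y : ℝ => -(2 * a / y)) (2 * a / t ^ 2) t := by
      intro t ht
      have := ((hasDerivAt_inv (hpos t ht).ne').const_mul (2 * a)).neg
      convert this using 1
      · rfl
      · rfl
      · funext y; simp [div_eq_mul_inv]
      · ring
    have hgInt : IntervalIntegrable (fun t : ℝ => 2 * a / t ^ 2) MeasureTheory.volume x₁ x₂ := by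
      apply ContinuousOn.intervalIntegrable
      exact continuousOn_const.div ((continuous_pow 2).continuousOn)
        (fun t ht => pow_ne_zero _ (hpos t ht).ne')
    have gval : ∫ t in x₁..x₂, 2 * a / t ^ 2 = 2 * a / x₁ - 2 * a / x₂ := by
      rw [intervalIntegral.integral_eq_sub_of_hasDerivAt hg hgInt]
      ring
    have hnormD : ∀ t ∈ Set.Ioc x₁ x₂, ‖D t‖ ≤ 2 * a / t ^ 2 := by
      intro t ht
      have htpos : 0 < t := lt_trans hx1 ht.1
      have hb1 : ‖L (b t)‖ = 1 := by
        rw [← enorm3_eq_norm, enorm3, hbn t htpos, Real.sqrt_one]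
      rw [hD]
      simp only [map_neg, norm_neg]
      rw [L.map_smul, norm_smul, hb1, mul_one,
        Real.norm_eq_abs, abs_of_nonneg (by positivity : (0:ℝ) ≤ 2 * a / t ^ 2)]
    have hbound : ‖∫ t in x₁..x₂, D t‖ ≤ |∫ t in x₁..x₂, 2 * a / t ^ 2| := by
      apply intervalIntegral.norm_integral_le_abs_of_norm_le _ hgInt
      filter_upwards [MeasureTheory.ae_restrict_mem measurableSet_uIoc] with t ht
      rw [Set.uIoc_of_le h12] at ht
      exact hnormD t ht
    have hge : (0:ℝ) ≤ 2 * a / x₁ - 2 * a / x₂ := by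
      have hx2 : 0 < x₂ := lt_of_lt_of_le hx1 h12
      have h1 := div_le_div_of_nonneg_left (by linarith : (0:ℝ) ≤ 2 * a) hx1 h12
      nlinarith [one_div_le_one_div_of_le hx1 h12, ha.le]
    rw [gval, abs_of_nonneg hge] at hbound
    rw [key] at hbound
    rw [← map_sub] at hbound
    rw [enorm3_eq_norm, ← hL]
    have habs : |1 / x₁ - 1 / x₂| = 1 / x₁ - 1 / x₂ := by
      apply abs_of_nonneg
      have hx2 : 0 < x₂ := lt_of_lt_of_le hx1 h12
      have := one_div_le_one_div_of_le hx1 h12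
      linarith
    rw [habs]
    calc ‖L (V x₂ - V x₁)‖ ≤ 2 * a / x₁ - 2 * a / x₂ := hbound
      _ = 2 * a * (1 / x₁ - 1 / x₂) := by ring
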